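/- Let A be a real n×n matrix, V a real n×k matrix with orthonormal columns, and set R = A V − V (Vᵀ A V). Let x ∈ ℝⁿ be a nonzero eigenvector of A (A x = λ x), and let R⁺ be the Moore–Penrose pseudoinverse of R, i.e. a k×n matrix P satisfying R P R = R, P R P = P, (R P)ᵀ = R P and (P R)ᵀ = P R. Then for every b ∈ ℝᵏ with R b = 0, the continuation vector t* = P x + b maximizes cos θ(x, Range{V, A V t}) over all t ∈ ℝᵏ; equivalently, for every t ∈ ℝᵏ, the Euclidean distance from x to the subspace span(columns of V ∪ {A V t*}) is less than or equal to the Euclidean distance from x to span(columns of V ∪ {A V t}). -/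

import Mathlib

open Matrix


noncomputable def Eq2 (n : ℕ) : (Fin n → ℝ) ≃ₗ[ℝ] EuclideanSpace ℝ (Fin n) :=
  (WithLp.linearEquiv 2 ℝ (Fin n → ℝ)).symm

lemma Eq2_eq (n : ℕ) (v : Fin n → ℝ) : Eq2 n v = (WithLp.equiv 2 (Fin n → ℝ)).symm v := rfl

lemma inner_Eq2 {n : ℕ} (u v : Fin n → ℝ) : (inner ℝ (Eq2 n u) (Eq2 n v) : ℝ) = u ⬝ᵥ v := by
  simp [PiLp.inner_apply, RCLike.inner_apply, dotProduct, Eq2, mul_comm]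

lemma sum_smul_col {n k : ℕ} (V : Matrix (Fin n) (Fin k) ℝ) (c : Fin k → ℝ) :
    ∑ j, c j • ((WithLp.equiv 2 (Fin n → ℝ)).symm (fun i => V i j)) = Eq2 n (V.mulVec c) := by
  rw [show V.mulVec c = ∑ j, c j • (fun i => V i j) from ?_, map_sum]
  · simp [Eq2_eq]
  · funext i
    simp [Matrix.mulVec, dotProduct, Finset.sum_apply, mul_comm]

/-- With `R = A V - V (Vᵀ A V)`, `x` a nonzero eigenvector of `A`,
`P` the Moore–Penrose pseudoinverse of `R` (characterized by the four Penrose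
equations), and `b` in the nullspace of `R`, the continuation vector
`t* = P x + b` maximizes `cos θ(x, Range{V, A V t})`; equivalently, it
minimizes the Euclidean distance from `x` to the subspace spanned by the
columns of `V` together with `A V t`. -/
theorem optimal_continuation_vector
    {n k : ℕ} (A : Matrix (Fin n) (Fin n) ℝ) (V : Matrix (Fin n) (Fin k) ℝ)
    (hV : Vᵀ * V = 1)
    (R : Matrix (Fin n) (Fin k) ℝ) (hR : R = A * V - V * (Vᵀ * A * V))
    (lam : ℝ) (x : Fin n → ℝ) (hx : A.mulVec x = lam • x) (hx0 : x ≠ 0)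
    (P : Matrix (Fin k) (Fin n) ℝ)
    (hP1 : R * P * R = R) (hP2 : P * R * P = P)
    (hP3 : (R * P)ᵀ = R * P) (hP4 : (P * R)ᵀ = P * R)
    (b : Fin k → ℝ) (hb : R.mulVec b = 0)
    (tstar : Fin k → ℝ) (htstar : tstar = P.mulVec x + b)
    -- the subspace spanned by the columns of `V` together with `A V t`,
    -- viewed inside Euclidean space
    (S : (Fin k → ℝ) → Submodule ℝ (EuclideanSpace ℝ (Fin n)))
    (hS : ∀ t, S t = Submodule.span ℝ
        ((Set.range fun j : Fin k =>
            (WithLp.equiv 2 (Fin n → ℝ)).symm (fun i => V i j)) ∪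
          {(WithLp.equiv 2 (Fin n → ℝ)).symm (A.mulVec (V.mulVec t))})) :
    ∀ t : Fin k → ℝ,
      Metric.infDist ((WithLp.equiv 2 (Fin n → ℝ)).symm x)
          (S tstar : Set (EuclideanSpace ℝ (Fin n)))
        ≤ Metric.infDist ((WithLp.equiv 2 (Fin n → ℝ)).symm x)
          (S t : Set (EuclideanSpace ℝ (Fin n))) := by
  intro t
  set W : Matrix (Fin k) (Fin k) ℝ := Vᵀ * A * V with hW
  have hVR : Vᵀ * R = 0 := by
    rw [hR, Matrix.mul_sub, ← Matrix.mul_assoc, ← Matrix.mul_assoc, hV, Matrix.one_mul,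
      ← hW, sub_self]
  have hRV : Rᵀ * V = 0 := by
    have := congrArg Matrix.transpose hVR
    rwa [Matrix.transpose_mul, Matrix.transpose_transpose, Matrix.transpose_zero] at this
  have hRRP : Rᵀ * R * P = Rᵀ := by
    calc Rᵀ * R * P = Rᵀ * (R * P) := by rw [Matrix.mul_assoc]
    _ = Rᵀ * (R * P)ᵀ := by rw [hP3]
    _ = ((R * P) * R)ᵀ := (Matrix.transpose_mul (R * P) R).symm
    _ = Rᵀ := by rw [hP1]
  have hAV : ∀ τ : Fin k → ℝ,
      A.mulVec (V.mulVec τ) = R.mulVec τ + V.mulVec (W.mulVec τ) := by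
    intro τ
    have h : A * V = R + V * W := by rw [hR]; abel
    rw [Matrix.mulVec_mulVec, h, Matrix.add_mulVec, ← Matrix.mulVec_mulVec]
  set c₁ : Fin k → ℝ := Vᵀ.mulVec x - W.mulVec tstar with hc₁
  set u' : Fin n → ℝ := V.mulVec c₁ + A.mulVec (V.mulVec tstar) with hu'
  set r : Fin n → ℝ := x - u' with hrdef
  have hRt : R.mulVec tstar = (R * P).mulVec x := by
    rw [htstar, Matrix.mulVec_add, hb, add_zero, Matrix.mulVec_mulVec]
  have hr : r = x - V.mulVec (Vᵀ.mulVec x) - (R * P).mulVec x := by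
    rw [hrdef, hu', hAV, hRt, hc₁, Matrix.mulVec_sub]
    abel
  have hVr : Vᵀ.mulVec r = 0 := by
    have e1 : Vᵀ * (V * Vᵀ) = Vᵀ := by rw [← Matrix.mul_assoc, hV, Matrix.one_mul]
    have e2 : Vᵀ * (R * P) = 0 := by rw [← Matrix.mul_assoc, hVR, Matrix.zero_mul]
    rw [hr]
    simp only [Matrix.mulVec_sub, Matrix.mulVec_mulVec, e1, e2, Matrix.zero_mulVec,
      sub_self, zero_sub, neg_zero, sub_zero]
  have hRr : Rᵀ.mulVec r = 0 := by
    have e1 : Rᵀ * (V * Vᵀ) = 0 := by rw [← Matrix.mul_assoc, hRV, Matrix.zero_mul]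
    have e2 : Rᵀ * (R * P) = Rᵀ := by rw [← Matrix.mul_assoc, hRRP]
    rw [hr]
    simp only [Matrix.mulVec_sub, Matrix.mulVec_mulVec, e1, e2, Matrix.zero_mulVec,
      sub_zero, sub_self]
  have hrdot : ∀ (a m : Fin k → ℝ), r ⬝ᵥ (V.mulVec a + R.mulVec m) = 0 := by
    intro a m
    rw [dotProduct_add, Matrix.dotProduct_mulVec, Matrix.dotProduct_mulVec,
      ← Matrix.mulVec_transpose, ← Matrix.mulVec_transpose, hVr, hRr,
      zero_dotProduct, zero_dotProduct, add_zero]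
  have hy'mem : Eq2 n u' ∈ S tstar := by
    rw [hS, Submodule.span_union]
    have h1 : Eq2 n u' = Eq2 n (V.mulVec c₁) + Eq2 n (A.mulVec (V.mulVec tstar)) := by
      rw [hu', map_add]
    rw [h1]
    apply Submodule.add_mem_sup
    · rw [← sum_smul_col]
      exact Submodule.sum_mem _ fun j _ => Submodule.smul_mem _ _
        (Submodule.subset_span ⟨j, rfl⟩)
    · exact Submodule.subset_span rfl
  have key : ∀ y ∈ (S t : Set (EuclideanSpace ℝ (Fin n))),
      Metric.infDist ((WithLp.equiv 2 (Fin n → ℝ)).symm x)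
        (S tstar : Set (EuclideanSpace ℝ (Fin n))) ≤
      dist ((WithLp.equiv 2 (Fin n → ℝ)).symm x) y := by
    intro y hy
    rw [show (y ∈ (S t : Set (EuclideanSpace ℝ (Fin n)))) = (y ∈ S t) from rfl] at hy
    rw [hS, Submodule.span_union, Submodule.mem_sup] at hy
    obtain ⟨y₁, hy₁, y₂, hy₂, rfl⟩ := hy
    rw [Submodule.mem_span_range_iff_exists_fun] at hy₁
    obtain ⟨c, hc⟩ := hy₁
    rw [Submodule.mem_span_singleton] at hy₂
    obtain ⟨s, hs⟩ := hy₂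
    set u : Fin n → ℝ := V.mulVec c + s • A.mulVec (V.mulVec t) with hu
    have hyu : y₁ + y₂ = Eq2 n u := by
      rw [← hc, ← hs, sum_smul_col, hu, map_add, _root_.map_smul]
      rfl
    have hd : u' - u = V.mulVec (c₁ + W.mulVec tstar - c - s • W.mulVec t)
        + R.mulVec (tstar - s • t) := by
      rw [hu', hu, hAV, hAV]
      simp only [Matrix.mulVec_add, Matrix.mulVec_sub, Matrix.mulVec_smul, smul_add]
      abel
    have hinner : (inner ℝ (Eq2 n r) (Eq2 n (u' - u)) : ℝ) = 0 := by
      rw [inner_Eq2, hd, hrdot]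
    have step : dist ((WithLp.equiv 2 (Fin n → ℝ)).symm x) (Eq2 n u')
        ≤ dist ((WithLp.equiv 2 (Fin n → ℝ)).symm x) (Eq2 n u) := by
      rw [dist_eq_norm, dist_eq_norm, ← Eq2_eq, ← map_sub, ← map_sub]
      have hxu : x - u = r + (u' - u) := by rw [hrdef]; abel
      rw [hxu, map_add]
      have hrr : Eq2 n (x - u') = Eq2 n r := by rw [hrdef]
      rw [hrr]
      have h2 := norm_add_sq_real (Eq2 n r) (Eq2 n (u' - u))
      rw [hinner] at h2
      nlinarith [norm_nonneg (Eq2 n (u' - u)), norm_nonneg (Eq2 n r),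
        norm_nonneg (Eq2 n r + Eq2 n (u' - u))]
    calc Metric.infDist ((WithLp.equiv 2 (Fin n → ℝ)).symm x) (S tstar : Set _)
        ≤ dist ((WithLp.equiv 2 (Fin n → ℝ)).symm x) (Eq2 n u') :=
          Metric.infDist_le_dist_of_mem hy'mem
      _ ≤ dist ((WithLp.equiv 2 (Fin n → ℝ)).symm x) (y₁ + y₂) := by rw [hyu]; exact step
  by_contra hcon
  push_neg at hcon
  have hne : (S t : Set (EuclideanSpace ℝ (Fin n))).Nonempty := ⟨0, (S t).zero_mem⟩
  obtain ⟨y, hy, hlt⟩ := (Metric.infDist_lt_iff hne).mp hcon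
  exact absurd (key y hy) (not_le.mpr hlt)
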